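/- Dinkelbach sufficiency: Let D be a nonempty feasible set, let N, E : D → ℝ with E(x) > 0 for all x ∈ D, let x* ∈ D and ρ ∈ ℝ. If N(x) − ρ·E(x) ≤ 0 for all x ∈ D and N(x*) − ρ·E(x*) = 0, then ρ = N(x*)/E(x*) and x* maximizes the ratio: N(x)/E(x) ≤ N(x*)/E(x*) for all x ∈ D. -/
import Mathlib

/-- Dinkelbach sufficiency: if the linearized objective `x ↦ N x - ρ * E x`
is nonpositive on a nonempty feasible set `D` (with `E > 0`) and vanishes at
`x*`, then `ρ = N x* / E x*` and `x*` maximizes the ratio `N/E` over `D`. -/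
theorem dinkelbach_sufficiency {D : Type*} [Nonempty D]
    (N E : D → ℝ) (hE : ∀ x, 0 < E x) (xstar : D) (ρ : ℝ)
    (hle : ∀ x, N x - ρ * E x ≤ 0)
    (heq : N xstar - ρ * E xstar = 0) :
    ρ = N xstar / E xstar ∧ ∀ x, N x / E x ≤ N xstar / E xstar := by
  have hρ : ρ = N xstar / E xstar := by
    have h := (hE xstar).ne'
    field_simp
    linarith [heq]
  refine ⟨hρ, fun x => ?_⟩
  rw [← hρ, div_le_iff₀ (hE x)]
  linarith [hle x]
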